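/- A nonempty closed set A ⊆ ℝ₊ᵖ is radiant if and only if for every x ∈ ℝ₊ᵖ \ A there exists a cone K ⊆ ℝ₊ᵖ such that x ∈ K and A ∩ (x + K) = ∅. Moreover, when A is radiant, for each x ∈ ℝ₊ᵖ \ A the cone K_{A,x} := { Σᵢ λᵢ (x + r e_i) : λᵢ > 0 for i with xᵢ > 0, λᵢ ≥ 0 for i with xᵢ = 0 } ∪ {0}, where r := d_∞(x, A) and the e_i are the standard unit vectors, is a convex cone contained in ℝ₊ᵖ with K_{A,x} \ {0} open in ℝ₊ᵖ, x ∈ K_{A,x}, and A ∩ (x + K_{A,x}) = ∅. -/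

import Mathlib

open scoped Pointwise

/-- A nonempty set `C` is radiant if `c ∈ C` and `t ∈ (0, 1]` imply `t • c ∈ C`. -/
def Radiant {E : Type*} [SMul ℝ E] (C : Set E) : Prop :=
  ∀ c ∈ C, ∀ t : ℝ, 0 < t → t ≤ 1 → t • c ∈ C

/-- A set `K` is a cone if `t • k ∈ K` for every `k ∈ K` and `t > 0`. -/
def IsConeSet {E : Type*} [SMul ℝ E] (K : Set E) : Prop :=
  ∀ k ∈ K, ∀ t : ℝ, 0 < t → t • k ∈ K

/-- The cone `K_{A,x} = { ∑ᵢ λᵢ (x + r eᵢ) : λᵢ > 0 for i with xᵢ > 0, λᵢ ≥ 0 otherwise } ∪ {0}`. -/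
noncomputable def sepCone {p : ℕ} (x : Fin p → ℝ) (r : ℝ) : Set (Fin p → ℝ) :=
  {z | ∃ lam : Fin p → ℝ, (∀ i, 0 ≤ lam i) ∧ (∀ i, 0 < x i → 0 < lam i) ∧
    z = ∑ i, lam i • (x + r • (Pi.single i 1 : Fin p → ℝ))} ∪ {0}

lemma sepCone_rep {p : ℕ} (x lam : Fin p → ℝ) (r : ℝ) :
    ∑ i, lam i • (x + r • (Pi.single i 1 : Fin p → ℝ)) = (∑ i, lam i) • x + r • lam := by
  funext j
  simp only [Finset.sum_apply, Pi.smul_apply, Pi.add_apply, smul_eq_mul, Pi.single_apply,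
    mul_ite, mul_one, mul_zero, mul_add, Finset.sum_add_distrib, Finset.sum_ite_eq,
    Finset.mem_univ, if_true, ← Finset.sum_mul]
  ring

lemma mem_sepCone_char {p : ℕ} {x : Fin p → ℝ} {r : ℝ} (hr : 0 < r) (hx : 0 ≤ x)
    (z : Fin p → ℝ) :
    z ∈ sepCone x r ↔ z = 0 ∨
      ((∀ i, ((∑ j, z j) / (r + ∑ j, x j)) * x i ≤ z i) ∧
       (∀ i, 0 < x i → ((∑ j, z j) / (r + ∑ j, x j)) * x i < z i)) := by
  have hD : 0 < r + ∑ j, x j :=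
    add_pos_of_pos_of_nonneg hr (Finset.sum_nonneg fun j _ => hx j)
  constructor
  · rintro (⟨lam, h0, hpos, rfl⟩ | rfl)
    · right
      rw [sepCone_rep]
      have hsum : ∑ j, ((∑ i, lam i) • x + r • lam) j = (∑ i, lam i) * (r + ∑ j, x j) := by
        simp only [Pi.add_apply, Pi.smul_apply, smul_eq_mul, Finset.sum_add_distrib,
          ← Finset.mul_sum, ← Finset.sum_mul]
        ring
      rw [hsum, mul_div_cancel_right₀ _ (ne_of_gt hD)]
      constructor
      · intro i
        simp only [Pi.add_apply, Pi.smul_apply, smul_eq_mul]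
        nlinarith [h0 i]
      · intro i hxi
        simp only [Pi.add_apply, Pi.smul_apply, smul_eq_mul]
        nlinarith [hpos i hxi]
    · left; rfl
  · rintro (rfl | ⟨hle, hlt⟩)
    · right; rfl
    · set s := (∑ j, z j) / (r + ∑ j, x j) with hs
      left
      refine ⟨fun i => (z i - s * x i) / r, ?_, ?_, ?_⟩
      · intro i
        have := hle i
        exact div_nonneg (by linarith) hr.le
      · intro i hxi
        have := hlt i hxi
        exact div_pos (by linarith) hr
      · rw [sepCone_rep]
        have hsl : ∑ i, (z i - s * x i) / r = s := by
          have h1 : s * (r + ∑ j, x j) = ∑ j, z j := by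
            rw [hs]; field_simp
          rw [← Finset.sum_div, Finset.sum_sub_distrib, ← Finset.mul_sum,
            div_eq_iff (ne_of_gt hr)]
          linarith
        rw [hsl]
        funext j
        simp only [Pi.add_apply, Pi.smul_apply, smul_eq_mul]
        field_simp
        ring

lemma sepCone_nonneg {p : ℕ} {x : Fin p → ℝ} {r : ℝ} (hx : 0 ≤ x) (hr : 0 ≤ r) :
    sepCone x r ⊆ {z | 0 ≤ z} := by
  rintro z (⟨lam, h0, -, rfl⟩ | rfl)
  · rw [Set.mem_setOf_eq, sepCone_rep, Pi.le_def]
    intro j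
    simp only [Pi.add_apply, Pi.smul_apply, Pi.zero_apply, smul_eq_mul]
    have hsl : 0 ≤ ∑ i, lam i := Finset.sum_nonneg fun i _ => h0 i
    exact add_nonneg (mul_nonneg hsl (hx j)) (mul_nonneg hr (h0 j))
  · exact le_refl (0 : Fin p → ℝ)

lemma sepCone_cone {p : ℕ} (x : Fin p → ℝ) (r : ℝ) : IsConeSet (sepCone x r) := by
  rintro k (⟨lam, h0, hpos, rfl⟩ | rfl) t ht
  · left
    refine ⟨t • lam, fun i => mul_nonneg ht.le (h0 i),
      fun i hi => mul_pos ht (hpos i hi), ?_⟩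
    rw [Finset.smul_sum]
    exact Finset.sum_congr rfl fun i _ => by rw [smul_smul]; rfl
  · right; simp

lemma sepCone_convex {p : ℕ} (x : Fin p → ℝ) (r : ℝ) : Convex ℝ (sepCone x r) := by
  have hcone := sepCone_cone x r
  have hzero : (0 : Fin p → ℝ) ∈ sepCone x r := Or.inr rfl
  have key : ∀ w ∈ sepCone x r, ∀ b : ℝ, 0 ≤ b → b • w ∈ sepCone x r := by
    intro w hw b hb
    rcases hb.eq_or_lt with rfl | hb'
    · rw [zero_smul]; exact hzero
    · exact hcone w hw b hb'
  rintro z (⟨lam, h0, hp, rfl⟩ | rfl) w hw a b ha hb hab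
  · rcases hw with ⟨mu, g0, gp, rfl⟩ | rfl
    · rcases ha.eq_or_lt with rfl | ha'
      · rw [zero_smul, zero_add]
        exact key _ (Or.inl ⟨mu, g0, gp, rfl⟩) b hb
      · left
        refine ⟨fun i => a * lam i + b * mu i,
          fun i => add_nonneg (mul_nonneg ha (h0 i)) (mul_nonneg hb (g0 i)),
          fun i hi => add_pos_of_pos_of_nonneg (mul_pos ha' (hp i hi))
            (mul_nonneg hb (gp i hi).le), ?_⟩
        rw [Finset.smul_sum, Finset.smul_sum, ← Finset.sum_add_distrib]
        exact Finset.sum_congr rfl fun i _ => by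
          rw [smul_smul, smul_smul, ← add_smul]
    · rw [smul_zero, add_zero]
      exact key _ (Or.inl ⟨lam, h0, hp, rfl⟩) a ha
  · rw [smul_zero, zero_add]
    exact key _ hw b hb

theorem stmt_14 {p : ℕ} (A : Set (Fin p → ℝ)) (hA : ∀ x ∈ A, 0 ≤ x)
    (hne : A.Nonempty) (hcl : IsClosed A) :
    (Radiant A ↔ ∀ x : Fin p → ℝ, 0 ≤ x → x ∉ A →
      ∃ K : Set (Fin p → ℝ), K ⊆ {z | 0 ≤ z} ∧ IsConeSet K ∧ x ∈ K ∧
        A ∩ ({x} + K) = ∅) ∧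
    (Radiant A → ∀ x : Fin p → ℝ, 0 ≤ x → x ∉ A →
      sepCone x (Metric.infDist x A) ⊆ {z | 0 ≤ z} ∧
      Convex ℝ (sepCone x (Metric.infDist x A)) ∧
      IsConeSet (sepCone x (Metric.infDist x A)) ∧
      (∃ U : Set (Fin p → ℝ), IsOpen U ∧
        sepCone x (Metric.infDist x A) \ {0} = U ∩ {z | 0 ≤ z}) ∧
      x ∈ sepCone x (Metric.infDist x A) ∧
      A ∩ ({x} + sepCone x (Metric.infDist x A)) = ∅) := by
  have main : Radiant A → ∀ x : Fin p → ℝ, 0 ≤ x → x ∉ A →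
      sepCone x (Metric.infDist x A) ⊆ {z | 0 ≤ z} ∧
      Convex ℝ (sepCone x (Metric.infDist x A)) ∧
      IsConeSet (sepCone x (Metric.infDist x A)) ∧
      (∃ U : Set (Fin p → ℝ), IsOpen U ∧
        sepCone x (Metric.infDist x A) \ {0} = U ∩ {z | 0 ≤ z}) ∧
      x ∈ sepCone x (Metric.infDist x A) ∧
      A ∩ ({x} + sepCone x (Metric.infDist x A)) = ∅ := by
    intro hrad x hx hxA
    set r := Metric.infDist x A with hrdef
    have hr : 0 < r := (hcl.notMem_iff_infDist_pos hne).mp hxA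
    have hD : 0 < r + ∑ j, x j :=
      add_pos_of_pos_of_nonneg hr (Finset.sum_nonneg fun j _ => hx j)
    refine ⟨sepCone_nonneg hx hr.le, sepCone_convex x r, sepCone_cone x r, ?_, ?_, ?_⟩
    · -- openness
      refine ⟨{z | 0 < ∑ j, z j} ∩ ⋂ i : Fin p,
        {z : Fin p → ℝ | 0 < x i → ((∑ j, z j) / (r + ∑ j, x j)) * x i < z i}, ?_, ?_⟩
      · have hcont : Continuous fun z : Fin p → ℝ => ∑ j, z j :=
          continuous_finset_sum _ fun j _ => continuous_apply j
        refine (isOpen_lt continuous_const hcont).inter (isOpen_iInter_of_finite fun i => ?_)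
        by_cases hxi : 0 < x i
        · have : {z : Fin p → ℝ | 0 < x i → ((∑ j, z j) / (r + ∑ j, x j)) * x i < z i}
              = {z : Fin p → ℝ | ((∑ j, z j) / (r + ∑ j, x j)) * x i < z i} := by
            ext z; simp [hxi]
          rw [this]
          exact isOpen_lt ((hcont.div_const _).mul continuous_const) (continuous_apply i)
        · have : {z : Fin p → ℝ | 0 < x i → ((∑ j, z j) / (r + ∑ j, x j)) * x i < z i}
              = Set.univ := by
            ext z; simp [hxi]
          rw [this]; exact isOpen_univ
      · ext z
        constructor
        · rintro ⟨hz, hz0⟩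
          have hz0' : z ≠ 0 := hz0
          have hzn : 0 ≤ z := sepCone_nonneg hx hr.le hz
          rcases (mem_sepCone_char hr hx z).mp hz with rfl | ⟨h1, h2⟩
          · exact absurd rfl hz0'
          refine ⟨⟨?_, Set.mem_iInter.mpr fun i => h2 i⟩, hzn⟩
          obtain ⟨j, hj⟩ := Function.ne_iff.mp hz0'
          exact Finset.sum_pos' (fun i _ => hzn i)
            ⟨j, Finset.mem_univ j, lt_of_le_of_ne (hzn j) (Ne.symm hj)⟩
        · rintro ⟨⟨hsum, hstrict⟩, hzn⟩
          have hzmem : ∀ i, 0 ≤ z i := fun i => hzn i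
          have hz0 : z ≠ 0 := by
            rintro rfl; simp at hsum
          refine ⟨(mem_sepCone_char hr hx z).mpr (Or.inr ⟨?_, Set.mem_iInter.mp hstrict⟩), hz0⟩
          intro i
          rcases eq_or_lt_of_le (show (0:ℝ) ≤ x i from hx i) with hxi | hxi
          · rw [← hxi, mul_zero]; exact hzmem i
          · exact (Set.mem_iInter.mp hstrict i hxi).le
    · -- x ∈ sepCone
      left
      refine ⟨fun i => x i / (r + ∑ j, x j), fun i => div_nonneg (hx i) hD.le,
        fun i hi => div_pos hi hD, ?_⟩
      rw [sepCone_rep]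
      funext j
      simp only [Pi.add_apply, Pi.smul_apply, smul_eq_mul, ← Finset.sum_div]
      field_simp
      ring
    · -- disjointness
      rw [Set.eq_empty_iff_forall_notMem]
      rintro a ⟨haA, ha⟩
      rw [Set.singleton_add] at ha
      obtain ⟨k, hk, rfl⟩ := ha
      rcases hk with ⟨lam, h0, hp, rfl⟩ | rfl
      · set s := ∑ i, lam i with hs
        have hs0 : 0 ≤ s := Finset.sum_nonneg fun i _ => h0 i
        have h1s : (0:ℝ) < 1 + s := by linarith
        have ht : (0:ℝ) < (1 + s)⁻¹ := inv_pos.mpr h1s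
        have ht1 : (1 + s)⁻¹ ≤ 1 := by
          rw [inv_le_one_iff₀]; right; linarith
        have hmem := hrad _ haA ((1 + s)⁻¹) ht ht1
        have ha' : (1 + s)⁻¹ • (x + ∑ i, lam i • (x + r • (Pi.single i 1 : Fin p → ℝ)))
            = x + ((1 + s)⁻¹ * r) • lam := by
          rw [sepCone_rep, ← hs]
          funext j
          simp only [Pi.smul_apply, Pi.add_apply, smul_eq_mul]
          field_simp
          ring
        have hnorm : ‖((1 + s)⁻¹ * r) • lam‖ ≤ (1 + s)⁻¹ * r * s := by
          rw [norm_smul, Real.norm_eq_abs, abs_of_nonneg (by positivity)]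
          refine mul_le_mul_of_nonneg_left ?_ (by positivity)
          rw [pi_norm_le_iff_of_nonneg hs0]
          intro i
          rw [Real.norm_eq_abs, abs_of_nonneg (h0 i)]
          exact Finset.single_le_sum (fun i _ => h0 i) (Finset.mem_univ i)
        have hdist : dist x ((1 + s)⁻¹ • (x + ∑ i, lam i •
            (x + r • (Pi.single i 1 : Fin p → ℝ)))) ≤ (1 + s)⁻¹ * r * s := by
          rw [ha', dist_self_add_right]
          exact hnorm
        have hge : r ≤ (1 + s)⁻¹ * r * s :=
          le_trans (Metric.infDist_le_dist_of_mem hmem) hdist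
        have hinv : (1 + s)⁻¹ * (1 + s) = 1 := inv_mul_cancel₀ (ne_of_gt h1s)
        nlinarith [mul_le_mul_of_nonneg_right hge h1s.le]
      · exact hxA (by simpa using haA)
  refine ⟨⟨?_, ?_⟩, main⟩
  · intro hrad x hx0 hxA
    obtain ⟨h1, h2, h3, h4, h5, h6⟩ := main hrad x hx0 hxA
    exact ⟨sepCone x (Metric.infDist x A), h1, h3, h5, h6⟩
  · intro h c hc t ht0 ht1
    by_contra htc
    rcases ht1.eq_or_lt with rfl | ht1'
    · rw [one_smul] at htc; exact htc hc
    · have hx0 : 0 ≤ t • c := by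
        intro i
        exact mul_nonneg ht0.le (hA c hc i)
      obtain ⟨K, hK0, hKc, hxK, hdisj⟩ := h (t • c) hx0 htc
      have hk : ((1 - t) / t) • (t • c) ∈ K :=
        hKc _ hxK _ (div_pos (by linarith) ht0)
      have hcmem : c ∈ ({t • c} + K) := by
        rw [Set.singleton_add]
        refine ⟨((1 - t) / t) • (t • c), hk, ?_⟩
        show t • c + ((1 - t) / t) • t • c = c
        rw [smul_smul, div_mul_cancel₀ _ (ne_of_gt ht0), ← add_smul]
        norm_num
      have : c ∈ A ∩ ({t • c} + K) := ⟨hc, hcmem⟩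
      rw [hdisj] at this
      exact this
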